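/- Let n ≥ 3 be an integer and suppose the parameters satisfy the series-termination condition λ + λ₀ = (n−1)·a + (μ²/2)·(n−1)·(n−2). Define coefficients β₀ = 1, β₁ = (λ+λ₀)/λ, and β_k = [((λ+λ₀) − (k−1)·a − (μ²/2)·(k−1)·(k−2))/(k·λ)]·β_{k−1} for 2 ≤ k ≤ n−1. Then the polynomial ψ(φ) = Σ_{k=0}^{n−1} β_k·φ^k satisfies (μ²/2)·φ²·ψ''(φ) + (λ + a·φ)·ψ'(φ) = (λ + λ₀)·ψ(φ) for every φ ∈ ℝ. -/

import Mathlib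

/-- The coefficients `β_k` of the polynomial solution `ψ`:
`β₀ = 1`, `β₁ = (λ+λ₀)/λ`, and for `k ≥ 2`
`β_k = [((λ+λ₀) - (k-1)a - (μ²/2)(k-1)(k-2)) / (kλ)] β_{k-1}`. -/
noncomputable def psiCoef (lam lam0 a μ : ℝ) : ℕ → ℝ
  | 0 => 1
  | 1 => (lam + lam0) / lam
  | (k + 2) =>
      ((lam + lam0 - ((k : ℝ) + 1) * a - μ ^ 2 / 2 * ((k : ℝ) + 1) * (k : ℝ)) /
          (((k : ℝ) + 2) * lam)) * psiCoef lam lam0 a μ (k + 1)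

/-- The basic recurrence for `psiCoef`, in multiplied-out form. -/
lemma psiCoef_rec (lam lam0 a μ : ℝ) (hlam : lam ≠ 0) (k : ℕ) :
    (lam + lam0 - ((k : ℝ) + 1) * a - μ ^ 2 / 2 * ((k : ℝ) + 1) * (k : ℝ)) *
        psiCoef lam lam0 a μ (k + 1)
      = (((k : ℝ) + 2) * lam) * psiCoef lam lam0 a μ (k + 2) := by
  rw [psiCoef]
  have h2 : ((k : ℝ) + 2) * lam ≠ 0 := mul_ne_zero (by positivity) hlam
  field_simp

/-- For special parameter values (the series-termination condition
`λ + λ₀ = (n-1) a + (μ²/2)(n-1)(n-2)` with `n ≥ 3`), the polynomial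
`ψ(φ) = Σ_{k=0}^{n-1} β_k φ^k` solves `(μ²/2) φ² ψ'' + (λ + a φ) ψ' = (λ + λ₀) ψ` on `ℝ`. -/
theorem polynomial_solution
    (μ lam lam0 a : ℝ) (hμ : μ ≠ 0) (hlam : 0 < lam) (hlam0 : 0 < lam0)
    (n : ℕ) (hn : 3 ≤ n)
    (hterm : lam + lam0 =
      ((n : ℝ) - 1) * a + μ ^ 2 / 2 * ((n : ℝ) - 1) * ((n : ℝ) - 2)) :
    ∀ φ : ℝ,
      μ ^ 2 / 2 * φ ^ 2 *
          deriv (deriv (fun x : ℝ => ∑ k ∈ Finset.range n, psiCoef lam lam0 a μ k * x ^ k)) φ +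
        (lam + a * φ) *
          deriv (fun x : ℝ => ∑ k ∈ Finset.range n, psiCoef lam lam0 a μ k * x ^ k) φ =
      (lam + lam0) * ∑ k ∈ Finset.range n, psiCoef lam lam0 a μ k * φ ^ k := by
  obtain ⟨m, rfl⟩ : ∃ m, n = m + 3 := ⟨n - 3, by omega⟩
  intro φ
  set β := psiCoef lam lam0 a μ with hβdef
  have hlne : lam ≠ 0 := ne_of_gt hlam
  have hβ1 : lam * β 1 = lam + lam0 := by
    rw [hβdef]; rw [psiCoef]; field_simp
  have hβ0 : β 0 = 1 := by rw [hβdef, psiCoef]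
  -- rewrite the polynomial sum
  have hf : ∀ x : ℝ, ∑ k ∈ Finset.range (m + 3), β k * x ^ k
      = β 0 + β 1 * x + ∑ k ∈ Finset.range (m + 1), β (k + 2) * x ^ (k + 2) := by
    intro x
    rw [Finset.sum_range_succ' _ (m + 2), Finset.sum_range_succ' _ (m + 1)]
    rw [Finset.sum_congr rfl (fun i _ => rfl :
      ∀ i ∈ Finset.range (m + 1), β (i + 1 + 1) * x ^ (i + 1 + 1) = β (i + 2) * x ^ (i + 2))]
    simp only [pow_zero, pow_one, mul_one, zero_add]
    ring
  have hffun : (fun x : ℝ => ∑ k ∈ Finset.range (m + 3), β k * x ^ k)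
      = fun x : ℝ => β 0 + β 1 * x + ∑ k ∈ Finset.range (m + 1), β (k + 2) * x ^ (k + 2) :=
    funext hf
  -- first derivative
  have H1 : ∀ x : ℝ, HasDerivAt (fun x : ℝ => ∑ k ∈ Finset.range (m + 3), β k * x ^ k)
      (β 1 + ∑ k ∈ Finset.range (m + 1), β (k + 2) * (((k : ℝ) + 2) * x ^ (k + 1))) x := by
    intro x
    rw [hffun]
    have h1 : HasDerivAt (fun x : ℝ => β 0 + β 1 * x) (β 1) x := by
      simpa using ((hasDerivAt_id x).const_mul (β 1)).const_add (β 0)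
    have h2 : HasDerivAt (fun x : ℝ => ∑ k ∈ Finset.range (m + 1), β (k + 2) * x ^ (k + 2))
        (∑ k ∈ Finset.range (m + 1), β (k + 2) * (((k : ℝ) + 2) * x ^ (k + 1))) x := by
      refine HasDerivAt.fun_sum fun k _ => ?_
      have := (hasDerivAt_pow (k + 2) x).const_mul (β (k + 2))
      simpa [Nat.add_sub_cancel] using this.congr_deriv (by push_cast; ring)
    exact h1.add h2
  have hd1 : deriv (fun x : ℝ => ∑ k ∈ Finset.range (m + 3), β k * x ^ k)
      = fun x : ℝ => β 1 + ∑ k ∈ Finset.range (m + 1), β (k + 2) * (((k : ℝ) + 2) * x ^ (k + 1)) :=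
    funext fun x => (H1 x).deriv
  -- second derivative
  have H2 : ∀ x : ℝ, HasDerivAt
      (fun x : ℝ => β 1 + ∑ k ∈ Finset.range (m + 1), β (k + 2) * (((k : ℝ) + 2) * x ^ (k + 1)))
      (∑ k ∈ Finset.range (m + 1), β (k + 2) * (((k : ℝ) + 2) * (((k : ℝ) + 1) * x ^ k))) x := by
    intro x
    refine HasDerivAt.const_add _ (HasDerivAt.fun_sum fun k _ => ?_)
    have := ((hasDerivAt_pow (k + 1) x).const_mul ((k : ℝ) + 2)).const_mul (β (k + 2))
    simpa [Nat.add_sub_cancel] using this.congr_deriv (by push_cast; ring)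
  rw [hd1, (H2 φ).deriv, hf φ]
  beta_reduce
  -- key sum identity using the recurrence and the termination condition
  have key : ∑ k ∈ Finset.range (m + 1), lam * ((k : ℝ) + 2) * β (k + 2) * φ ^ (k + 1)
      = (lam + lam0 - a) * β 1 * φ +
        ∑ k ∈ Finset.range (m + 1),
          (lam + lam0 - ((k : ℝ) + 2) * a - μ ^ 2 / 2 * ((k : ℝ) + 2) * ((k : ℝ) + 1)) *
            β (k + 2) * φ ^ (k + 2) := by
    rw [Finset.sum_range_succ' _ m, Finset.sum_range_succ _ m]
    have hlast : lam + lam0 - ((m : ℝ) + 2) * a - μ ^ 2 / 2 * ((m : ℝ) + 2) * ((m : ℝ) + 1) = 0 := by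
      push_cast at hterm
      nlinarith [hterm]
    rw [hlast, zero_mul, zero_mul, add_zero]
    have hfirst : lam * (((0 : ℕ) : ℝ) + 2) * β (0 + 2) * φ ^ (0 + 1)
        = (lam + lam0 - a) * β 1 * φ := by
      have h := psiCoef_rec lam lam0 a μ hlne 0
      rw [← hβdef] at h
      push_cast
      push_cast at h
      linear_combination φ * h.symm
    rw [hfirst]
    rw [Finset.sum_congr rfl (fun k _ => ?_), add_comm]
    have h := psiCoef_rec lam lam0 a μ hlne (k + 1)
    rw [← hβdef] at h
    push_cast at h ⊢
    linear_combination φ ^ (k + 2) * h.symm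
  -- combine everything
  have hsum : μ ^ 2 / 2 * φ ^ 2 *
        (∑ k ∈ Finset.range (m + 1), β (k + 2) * (((k : ℝ) + 2) * (((k : ℝ) + 1) * φ ^ k)))
      + (lam + a * φ) * (∑ k ∈ Finset.range (m + 1), β (k + 2) * (((k : ℝ) + 2) * φ ^ (k + 1)))
      - (lam + lam0) * (∑ k ∈ Finset.range (m + 1), β (k + 2) * φ ^ (k + 2))
      = ∑ k ∈ Finset.range (m + 1),
          (lam * ((k : ℝ) + 2) * β (k + 2) * φ ^ (k + 1)
            - (lam + lam0 - ((k : ℝ) + 2) * a - μ ^ 2 / 2 * ((k : ℝ) + 2) * ((k : ℝ) + 1)) *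
              β (k + 2) * φ ^ (k + 2)) := by
    simp only [Finset.mul_sum, ← Finset.sum_add_distrib, ← Finset.sum_sub_distrib]
    refine Finset.sum_congr rfl fun k _ => ?_
    ring
  rw [Finset.sum_sub_distrib, key] at hsum
  rw [hβ0]
  linear_combination hsum + hβ1
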